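/- Let A be a normal operator on a Hilbert space Y generating a strongly continuous semigroup with ‖e^{tA}‖ ≤ 1 for all t ≥ 0, and let a: ℂ⁻₀ → ℂ be analytic and bounded on the closed left half-plane with derivative bounds M_a^{(k)} = sup_{Re z ≤ 0} |a^{(k)}(z)|. Then for ℓ ≥ k ≥ 0 and h ≥ 0, the operator ∂_h^k(a(hA)) = A^k a^{(k)}(hA) maps Y_ℓ into Y_{ℓ−k} with ‖∂_h^k(a(hA))‖_{Y_ℓ → Y_{ℓ−k}} ≤ M_a^{(k)}. -/
import Mathlib


/- Statement 2: for a normal operator `A` with spectrum in the closed left half-plane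
and `a` analytic and bounded there with derivative bounds `M_a^{(k)}`, the operator
`∂_h^k(a(hA)) = A^k a^{(k)}(hA)` maps `Y_ℓ` to `Y_{ℓ-k}` with norm at most `M_a^{(k)}`.
As in Statement 0, by the spectral theorem we work in the multiplication operator
model: `A` is multiplication by a measurable `φ : α → ℂ` with `Re φ ≤ 0` on `L²(μ)`,
and `A^k a^{(k)}(hA)` is multiplication by `φ^k · a^{(k)}(hφ)`. -/

open MeasureTheory Set
open scoped ENNReal

/-- The spectral projection `P_m` (multiplication by the indicator of `{|φ| ≤ m}`). -/
noncomputable def Pm {α : Type*} (φ : α → ℂ) (m : ℝ) (U : α → ℂ) : α → ℂ :=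
  ({a | ‖φ a‖ ≤ m} : Set α).indicator U

/-- The complementary projection `Q_m = id - P_m`. -/
noncomputable def Qm {α : Type*} (φ : α → ℂ) (m : ℝ) (U : α → ℂ) : α → ℂ :=
  ({a | m < ‖φ a‖} : Set α).indicator U

/-- `|A|^ℓ` as a multiplication operator. -/
noncomputable def absApow {α : Type*} (φ : α → ℂ) (ℓ : ℝ) (U : α → ℂ) : α → ℂ :=
  fun a => ((‖φ a‖ ^ ℓ : ℝ) : ℂ) * U a

/-- The squared `Y_ℓ` norm: `‖U‖²_{Y_ℓ} = ‖P₁U‖²_Y + ‖|A|^ℓ Q₁U‖²_Y`. -/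
noncomputable def YnormSq {α : Type*} [MeasurableSpace α] (μ : Measure α) (φ : α → ℂ)
    (ℓ : ℝ) (U : α → ℂ) : ℝ≥0∞ :=
  eLpNorm (Pm φ 1 U) 2 μ ^ 2 + eLpNorm (absApow φ ℓ (Qm φ 1 U)) 2 μ ^ 2

/-- The `Y_ℓ` norm. -/
noncomputable def Ynorm {α : Type*} [MeasurableSpace α] (μ : Measure α) (φ : α → ℂ)
    (ℓ : ℝ) (U : α → ℂ) : ℝ≥0∞ :=
  YnormSq μ φ ℓ U ^ (1/2 : ℝ)

/-- If `‖f‖ ≤ M ‖g‖` pointwise with `0 ≤ M`, then `eLpNorm f ≤ ofReal M * eLpNorm g`. -/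
lemma eLpNorm_le_of_pointwise {α : Type*} [MeasurableSpace α] {μ : Measure α}
    {f g : α → ℂ} {M : ℝ} (hM : 0 ≤ M) (hfg : ∀ x, ‖f x‖ ≤ M * ‖g x‖) :
    eLpNorm f 2 μ ≤ ENNReal.ofReal M * eLpNorm g 2 μ := by
  have h1 : eLpNorm f 2 μ ≤ eLpNorm ((M : ℂ) • g) 2 μ := by
    apply eLpNorm_mono
    intro x
    simpa [norm_smul, abs_of_nonneg hM] using hfg x
  refine h1.trans ?_
  calc eLpNorm ((M : ℂ) • g) 2 μ ≤ ‖(M : ℂ)‖₊ • eLpNorm g 2 μ := eLpNorm_const_smul_le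
    _ = ENNReal.ofReal M * eLpNorm g 2 μ := by
        rw [ENNReal.smul_def, smul_eq_mul]
        congr 1
        simp only [ENNReal.ofReal, ← NNReal.coe_inj, Real.coe_toNNReal', nnnorm]
        simp [abs_of_nonneg hM, max_eq_left hM]
        exact (Real.toNNReal_of_nonneg hM).symm

/-- `‖∂_h^k(a(hA)) U‖_{Y_{ℓ-k}} = ‖A^k a^{(k)}(hA) U‖_{Y_{ℓ-k}} ≤ M_a^{(k)} ‖U‖_{Y_ℓ}`
for `ℓ ≥ k ≥ 0` and `h ≥ 0`. -/
theorem stmt2 {α : Type*} [MeasurableSpace α] (μ : Measure α) (φ : α → ℂ)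
    (hφ : Measurable φ) (hspec : ∀ x, (φ x).re ≤ 0)
    (a : ℂ → ℂ) (ha : ∀ z : ℂ, z.re ≤ 0 → AnalyticAt ℂ a z)
    (Ma : ℕ → ℝ) (hMa : ∀ (j : ℕ) (z : ℂ), z.re ≤ 0 → ‖iteratedDeriv j a z‖ ≤ Ma j)
    (ℓ : ℝ) (k : ℕ) (hk : (k : ℝ) ≤ ℓ) (h : ℝ) (hh : 0 ≤ h)
    (U : α → ℂ) (hU : Measurable U) :
    Ynorm μ φ (ℓ - k) (fun x => (φ x) ^ k * iteratedDeriv k a (h * φ x) * U x)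
      ≤ ENNReal.ofReal (Ma k) * Ynorm μ φ ℓ U := by
  set V : α → ℂ := fun x => (φ x) ^ k * iteratedDeriv k a (h * φ x) * U x with hV
  have hM0 : 0 ≤ Ma k := le_trans (norm_nonneg _) (hMa k 0 (by simp))
  have hre : ∀ x, ((h : ℂ) * φ x).re ≤ 0 := by
    intro x
    rw [Complex.re_ofReal_mul]
    exact mul_nonpos_of_nonneg_of_nonpos hh (hspec x)
  have hder : ∀ x, ‖iteratedDeriv k a (h * φ x)‖ ≤ Ma k := fun x => hMa k _ (hre x)
  set C := ENNReal.ofReal (Ma k) with hC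
  -- first piece
  have e1 : eLpNorm (Pm φ 1 V) 2 μ ≤ C * eLpNorm (Pm φ 1 U) 2 μ := by
    apply eLpNorm_le_of_pointwise hM0
    intro x
    unfold Pm
    by_cases hx : x ∈ ({a | ‖φ a‖ ≤ 1} : Set α)
    · rw [indicator_of_mem hx, indicator_of_mem hx]
      have hφ1 : ‖φ x‖ ^ k ≤ 1 := pow_le_one₀ (norm_nonneg _) hx
      have := hder x
      rw [hV]
      simp only [norm_mul, norm_pow]
      calc ‖φ x‖ ^ k * ‖iteratedDeriv k a (↑h * φ x)‖ * ‖U x‖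
          ≤ 1 * Ma k * ‖U x‖ := by
            apply mul_le_mul_of_nonneg_right _ (norm_nonneg _)
            exact mul_le_mul hφ1 (hder x) (norm_nonneg _) zero_le_one
        _ = Ma k * ‖U x‖ := by ring
    · rw [indicator_of_notMem hx, indicator_of_notMem hx]
      simp
  -- second piece
  have e2 : eLpNorm (absApow φ (ℓ - k) (Qm φ 1 V)) 2 μ
      ≤ C * eLpNorm (absApow φ ℓ (Qm φ 1 U)) 2 μ := by
    apply eLpNorm_le_of_pointwise hM0
    intro x
    unfold absApow Qm
    by_cases hx : x ∈ ({a | 1 < ‖φ a‖} : Set α)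
    · rw [indicator_of_mem hx, indicator_of_mem hx]
      have hφpos : (0 : ℝ) < ‖φ x‖ := lt_trans one_pos hx
      have hsplit : ‖φ x‖ ^ (ℓ - k) * ‖φ x‖ ^ k = ‖φ x‖ ^ ℓ := by
        rw [← Real.rpow_natCast (‖φ x‖) k, ← Real.rpow_add hφpos]
        ring_nf
      have := hder x
      rw [hV]
      simp only [norm_mul, norm_pow, Complex.norm_real, Real.norm_eq_abs,
        abs_of_nonneg (Real.rpow_nonneg (norm_nonneg (φ x)) _)]
      calc ‖φ x‖ ^ (ℓ - k) * (‖φ x‖ ^ k * ‖iteratedDeriv k a (h * φ x)‖ * ‖U x‖)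
          = (‖φ x‖ ^ (ℓ - k) * ‖φ x‖ ^ k) * ‖iteratedDeriv k a (h * φ x)‖ * ‖U x‖ := by ring
        _ = ‖φ x‖ ^ ℓ * ‖iteratedDeriv k a (h * φ x)‖ * ‖U x‖ := by rw [hsplit]
        _ ≤ ‖φ x‖ ^ ℓ * Ma k * ‖U x‖ := by
            have h0 : (0:ℝ) ≤ ‖φ x‖ ^ ℓ := Real.rpow_nonneg (norm_nonneg _) _
            apply mul_le_mul_of_nonneg_right _ (norm_nonneg _)
            exact mul_le_mul_of_nonneg_left (hder x) h0
        _ = Ma k * (‖φ x‖ ^ ℓ * ‖U x‖) := by ring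
    · rw [indicator_of_notMem hx, indicator_of_notMem hx]
      simp [mul_nonneg, hM0, Real.rpow_nonneg, norm_nonneg,
        mul_nonneg hM0 (mul_nonneg (Real.rpow_nonneg (norm_nonneg (φ x)) _) (norm_nonneg (0:ℂ)))]
  -- combine
  have hsq : YnormSq μ φ (ℓ - k) V ≤ C ^ 2 * YnormSq μ φ ℓ U := by
    unfold YnormSq
    rw [mul_add]
    gcongr
    · calc eLpNorm (Pm φ 1 V) 2 μ ^ 2 ≤ (C * eLpNorm (Pm φ 1 U) 2 μ) ^ 2 := by
            gcongr
        _ = C ^ 2 * eLpNorm (Pm φ 1 U) 2 μ ^ 2 := by rw [mul_pow]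
    · calc eLpNorm (absApow φ (ℓ - k) (Qm φ 1 V)) 2 μ ^ 2
          ≤ (C * eLpNorm (absApow φ ℓ (Qm φ 1 U)) 2 μ) ^ 2 := by gcongr
        _ = C ^ 2 * eLpNorm (absApow φ ℓ (Qm φ 1 U)) 2 μ ^ 2 := by rw [mul_pow]
  unfold Ynorm
  calc YnormSq μ φ (ℓ - k) V ^ (1/2 : ℝ) ≤ (C ^ 2 * YnormSq μ φ ℓ U) ^ (1/2 : ℝ) :=
        ENNReal.rpow_le_rpow hsq (by norm_num)
    _ = C * YnormSq μ φ ℓ U ^ (1/2 : ℝ) := by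
        rw [ENNReal.mul_rpow_of_nonneg _ _ (by norm_num : (0:ℝ) ≤ 1/2)]
        congr 1
        rw [← ENNReal.rpow_natCast C 2, ← ENNReal.rpow_mul]
        norm_num
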